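/- For any finite normalized block basis (x_j)_{j=1}^N of T_k(d,θ) and scalars (a_j), ‖Σ_{j=1}^N a_j x_j‖ ≤ (2/θ)(Σ_{j=1}^N |a_j|^p)^{1/p}, where p satisfies dθ = d^{1/p}. -/

import Mathlib

/-- Non-decreasing list of naturals. -/
abbrev NonDec (l : List ℕ) : Prop := l.Chain' (· ≤ ·)

/-- The order `≺` on nondecreasing sequences: the empty sequence is minimal;
nonempty sequences are compared by last entry, with lexicographic tie-breaking. -/
def prec (s t : List ℕ) : Prop :=
  (s = [] ∧ t ≠ []) ∨
  (s ≠ [] ∧ t ≠ [] ∧ (s.getLast! < t.getLast! ∨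
    (s.getLast! = t.getLast! ∧ List.Lex (· < ·) s t)))

/-- The map `X̂_v`: `(m_1,…,m_l) ↦ (f_1(m_1),…,f_l(m_l))` where
`f_j(0) = n_j` and `f_j(m) = n_k + m` for `m ≥ 1`, `v = (n_1,…,n_k)`. -/
def Xhat (v s : List ℕ) : List ℕ :=
  List.zipWith (fun a b => if b = 0 then a else v.getLast! + b) (v.take s.length) s

/-- The set `X_v^max`, described by its characterization:
`w ∈ X_v^max` iff `w` is nondecreasing of the same length as `v` and either
`w_1 > n_k`, or there is `1 ≤ i ≤ k` with `(w_1,…,w_i) = (n_1,…,n_i)` and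
(if `i < k`) `w_{i+1} > n_k`. -/
def XmaxSet (v : List ℕ) : Set (List ℕ) :=
  { w | w.length = v.length ∧ NonDec w ∧
    (v.getLast! < w.headI ∨
      ∃ i, 1 ≤ i ∧ i ≤ v.length ∧ w.take i = v.take i ∧
        (i < v.length → v.getLast! < w.getD i 0)) }

/-- An `E_k`-tree: a map on `ω^{≤k}` sending nondecreasing sequences of length `≤ k`
to nondecreasing sequences of the same length, preserving `≺` and initial segments. -/
def IsEkTree (k : ℕ) (X : List ℕ → List ℕ) : Prop :=
  (∀ s, NonDec s → s.length ≤ k → NonDec (X s) ∧ (X s).length = s.length) ∧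
  (∀ s t, NonDec s → NonDec t → s.length ≤ k → t.length ≤ k →
    (prec s t → prec (X s) (X t)) ∧ (s <+: t → X s <+: X t))

/-- `E ∈ AR^k`: `E` is a finite `≺`-initial segment of the restriction to `ω^{[k]}`
of some `E_k`-tree. -/
def memAR (k : ℕ) (E : Finset (List ℕ)) : Prop :=
  ∃ X : List ℕ → List ℕ, IsEkTree k X ∧
    (∀ e ∈ E, ∃ s, NonDec s ∧ s.length = k ∧ e = X s) ∧
    (∀ s, NonDec s → s.length = k → ∀ e ∈ E, prec (X s) e → X s ∈ E)

/-- `ω^{[k]}`: nondecreasing sequences of naturals of length exactly `k`. -/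
abbrev Vec (k : ℕ) := {l : List ℕ // NonDec l ∧ l.length = k}

/-- Restriction `Ex` of a finitely supported vector to a set of coordinates. -/
noncomputable def restrict {k : ℕ} (E : Finset (Vec k)) (x : Vec k →₀ ℝ) : Vec k →₀ ℝ :=
  x.filter (fun v => v ∈ E)

/-- `A < B`: every element of `A` is `≺`-below every element of `B`. -/
def Successive {k : ℕ} (A B : Finset (Vec k)) : Prop :=
  ∀ a ∈ A, ∀ b ∈ B, prec a.1 b.1

/-- Membership in `AR^k` for finite sets of elements of `ω^{[k]}`. -/
def memARV (k : ℕ) (E : Finset (Vec k)) : Prop :=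
  memAR k (E.image Subtype.val)

/-- A `d`-admissible sequence: at most `d` many `≺`-successive members of `AR^k`. -/
def Admissible (k d : ℕ) {m : ℕ} (E : Fin m → Finset (Vec k)) : Prop :=
  m ≤ d ∧ (∀ i, memARV k (E i)) ∧ ∀ i j, i < j → Successive (E i) (E j)

/-- The nondecreasing sequence of norms `|x|_j` defining the Tsirelson-type norm:
`|x|_0 = max |x_v|`, and `|x|_{j+1}` is the max of `|x|_j` and
`θ ∑ |E_i x|_j` over admissible sequences `(E_i)_{i=1}^m`, `1 ≤ m ≤ d`. -/
noncomputable def normSeq (k d : ℕ) (θ : ℝ) : ℕ → (Vec k →₀ ℝ) → ℝ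
  | 0, x => ⨆ v, |x v|
  | j + 1, x => max (normSeq k d θ j x)
      (sSup { r | ∃ m : ℕ, 1 ≤ m ∧ ∃ E : Fin m → Finset (Vec k),
        Admissible k d E ∧ r = θ * ∑ i, normSeq k d θ j (restrict (E i) x) })

/-- The norm of `T_k(d,θ)` on finitely supported vectors. -/
noncomputable def tnorm (k d : ℕ) (θ : ℝ) (x : Vec k →₀ ℝ) : ℝ :=
  ⨆ j, normSeq k d θ j x

theorem restrict_apply {k : ℕ} (E : Finset (Vec k)) (x : Vec k →₀ ℝ) (v : Vec k) :
    restrict E x v = if v ∈ E then x v else 0 := by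
  rw [restrict, Finsupp.filter_apply]

theorem restrict_add {k : ℕ} (E : Finset (Vec k)) (x y : Vec k →₀ ℝ) :
    restrict E (x + y) = restrict E x + restrict E y := Finsupp.filter_add

theorem restrict_smul {k : ℕ} (E : Finset (Vec k)) (c : ℝ) (x : Vec k →₀ ℝ) :
    restrict E (c • x) = c • restrict E x := Finsupp.filter_smul

theorem restrict_comm {k : ℕ} (E F : Finset (Vec k)) (x : Vec k →₀ ℝ) :
    restrict E (restrict F x) = restrict F (restrict E x) := by
  ext v
  simp only [restrict_apply]
  by_cases h : v ∈ E <;> by_cases h' : v ∈ F <;> simp [h, h']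

theorem restrict_support_subset {k : ℕ} (E : Finset (Vec k)) (x : Vec k →₀ ℝ) :
    (restrict E x).support ⊆ x.support := by
  intro v hv
  rw [restrict] at hv
  rw [Finsupp.support_filter, Finset.mem_filter] at hv
  exact hv.1


noncomputable def l1 {k : ℕ} (x : Vec k →₀ ℝ) : ℝ := ∑ v ∈ x.support, |x v|

theorem l1_nonneg {k : ℕ} (x : Vec k →₀ ℝ) : 0 ≤ l1 x :=
  Finset.sum_nonneg fun _ _ => abs_nonneg _

theorem abs_apply_le_l1 {k : ℕ} (x : Vec k →₀ ℝ) (v : Vec k) : |x v| ≤ l1 x := by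
  by_cases h : v ∈ x.support
  · exact Finset.single_le_sum (f := fun v => |x v|) (fun _ _ => abs_nonneg _) h
  · rw [Finsupp.notMem_support_iff.1 h]
    simpa using l1_nonneg x

theorem prec_asymm {s t : List ℕ} (h : prec s t) (h' : prec t s) : False := by
  rcases h with ⟨hs, ht⟩ | ⟨hs, ht, h⟩
  · rcases h' with ⟨hs', ht'⟩ | ⟨hs', ht', h'⟩
    · exact ht' hs
    · exact ht' hs
  · rcases h' with ⟨hs', ht'⟩ | ⟨hs', ht', h'⟩
    · exact ht hs'
    · rcases h with h | ⟨he, hl⟩ <;> rcases h' with h' | ⟨he', hl'⟩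
      · omega
      · omega
      · omega
      · exact Std.Asymm.asymm _ _ hl hl'

theorem prec_irrefl (s : List ℕ) : ¬ prec s s := fun h => prec_asymm h h

instance vecNonempty {k : ℕ} : Nonempty (Vec k) := by
  refine ⟨⟨List.replicate k 0, ?_, List.length_replicate⟩⟩
  induction k with
  | zero => exact List.isChain_nil
  | succ n ih =>
    rw [List.replicate_succ]
    cases n with
    | zero => exact List.isChain_singleton 0
    | succ m =>
      rw [List.replicate_succ]
      exact List.IsChain.cons_cons (by omega) (by rw [← List.replicate_succ]; exact ih)


section Lemmas

variable {k d : ℕ} {θ : ℝ}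

/-- pairwise disjointness of an admissible family -/
theorem admissible_disjoint {m : ℕ} {E : Fin m → Finset (Vec k)}
    (hE : Admissible k d E) {r s : Fin m} (hrs : r ≠ s) :
    Disjoint (E r) (E s) := by
  rw [Finset.disjoint_left]
  intro v hvr hvs
  rcases lt_or_gt_of_ne hrs with h | h
  · exact prec_irrefl v.1 (hE.2.2 r s h v hvr v hvs)
  · exact prec_irrefl v.1 (hE.2.2 s r h v hvs v hvr)

theorem sum_l1_restrict_le {m : ℕ} {E : Fin m → Finset (Vec k)}
    (hE : Admissible k d E) (x : Vec k →₀ ℝ) :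
    ∑ r, l1 (restrict (E r) x) ≤ l1 x := by
  have hsupp : ∀ r : Fin m, (restrict (E r) x).support = x.support.filter (· ∈ E r) := by
    intro r; rw [restrict, Finsupp.support_filter]
  have hval : ∀ r : Fin m, l1 (restrict (E r) x) = ∑ v ∈ x.support.filter (· ∈ E r), |x v| := by
    intro r
    rw [l1, hsupp r]
    refine Finset.sum_congr rfl fun v hv => ?_
    rw [Finset.mem_filter] at hv
    rw [restrict_apply, if_pos hv.2]
  calc ∑ r, l1 (restrict (E r) x) = ∑ r, ∑ v ∈ x.support.filter (· ∈ E r), |x v| := by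
        exact Finset.sum_congr rfl fun r _ => hval r
    _ = ∑ v ∈ Finset.univ.biUnion (fun r : Fin m => x.support.filter (· ∈ E r)), |x v| := by
        rw [Finset.sum_biUnion]
        intro r _ s _ hrs
        simp only [Function.onFun]
        rw [Finset.disjoint_left]
        intro v hv1 hv2
        rw [Finset.mem_filter] at hv1 hv2
        exact (Finset.disjoint_left.1 (admissible_disjoint hE hrs)) hv1.2 hv2.2
    _ ≤ ∑ v ∈ x.support, |x v| := by
        refine Finset.sum_le_sum_of_subset_of_nonneg ?_ (fun _ _ _ => abs_nonneg _)
        intro v hv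
        rw [Finset.mem_biUnion] at hv
        obtain ⟨r, _, hv⟩ := hv
        exact (Finset.mem_filter.1 hv).1
    _ = l1 x := rfl

end Lemmas
section NormSeqLemmas

variable {k d : ℕ} {θ : ℝ}

theorem normSeq_succ (j : ℕ) (x : Vec k →₀ ℝ) :
    normSeq k d θ (j + 1) x = max (normSeq k d θ j x)
      (sSup { r | ∃ m : ℕ, 1 ≤ m ∧ ∃ E : Fin m → Finset (Vec k),
        Admissible k d E ∧ r = θ * ∑ i, normSeq k d θ j (restrict (E i) x) }) := rfl

theorem bdd0 (x : Vec k →₀ ℝ) : BddAbove (Set.range fun v => |x v|) :=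
  ⟨l1 x, by rintro _ ⟨v, rfl⟩; exact abs_apply_le_l1 x v⟩

theorem normSeq_nonneg (j : ℕ) (x : Vec k →₀ ℝ) : 0 ≤ normSeq k d θ j x := by
  induction j with
  | zero => exact Real.iSup_nonneg fun v => abs_nonneg _
  | succ j ih => exact le_trans ih (le_max_left _ _)

theorem normSeq_le_l1 (hθ0 : 0 ≤ θ) (hθ1 : θ ≤ 1) (j : ℕ) (x : Vec k →₀ ℝ) :
    normSeq k d θ j x ≤ l1 x := by
  induction j generalizing x with
  | zero => exact ciSup_le fun v => abs_apply_le_l1 x v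
  | succ j ih =>
    rw [normSeq_succ]
    refine max_le (ih x) (Real.sSup_le ?_ (l1_nonneg x))
    rintro r ⟨m, hm, E, hE, rfl⟩
    calc θ * ∑ i, normSeq k d θ j (restrict (E i) x)
        ≤ θ * ∑ i, l1 (restrict (E i) x) :=
          mul_le_mul_of_nonneg_left (Finset.sum_le_sum fun i _ => ih _) hθ0
      _ ≤ θ * l1 x := mul_le_mul_of_nonneg_left (sum_l1_restrict_le hE x) hθ0
      _ ≤ 1 * l1 x := mul_le_mul_of_nonneg_right hθ1 (l1_nonneg x)
      _ = l1 x := one_mul _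

theorem nset_bddAbove (hθ0 : 0 ≤ θ) (hθ1 : θ ≤ 1) (j : ℕ) (x : Vec k →₀ ℝ) :
    BddAbove { r | ∃ m : ℕ, 1 ≤ m ∧ ∃ E : Fin m → Finset (Vec k),
        Admissible k d E ∧ r = θ * ∑ i, normSeq k d θ j (restrict (E i) x) } := by
  refine ⟨l1 x, ?_⟩
  rintro r ⟨m, hm, E, hE, rfl⟩
  calc θ * ∑ i, normSeq k d θ j (restrict (E i) x)
      ≤ θ * ∑ i, l1 (restrict (E i) x) :=
        mul_le_mul_of_nonneg_left
          (Finset.sum_le_sum fun i _ => normSeq_le_l1 hθ0 hθ1 j _) hθ0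
    _ ≤ θ * l1 x := mul_le_mul_of_nonneg_left (sum_l1_restrict_le hE x) hθ0
    _ ≤ 1 * l1 x := mul_le_mul_of_nonneg_right hθ1 (l1_nonneg x)
    _ = l1 x := one_mul _

theorem member_le_normSeq_succ (hθ0 : 0 ≤ θ) (hθ1 : θ ≤ 1) (j : ℕ) (x : Vec k →₀ ℝ)
    {m : ℕ} (hm : 1 ≤ m) (E : Fin m → Finset (Vec k)) (hE : Admissible k d E) :
    θ * ∑ i, normSeq k d θ j (restrict (E i) x) ≤ normSeq k d θ (j + 1) x := by
  rw [normSeq_succ]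
  exact le_trans (le_csSup (nset_bddAbove hθ0 hθ1 j x) ⟨m, hm, E, hE, rfl⟩) (le_max_right _ _)

theorem normSeq_le_succ (j : ℕ) (x : Vec k →₀ ℝ) :
    normSeq k d θ j x ≤ normSeq k d θ (j + 1) x := le_max_left _ _

theorem normSeq_bddAbove (hθ0 : 0 ≤ θ) (hθ1 : θ ≤ 1) (x : Vec k →₀ ℝ) :
    BddAbove (Set.range fun j => normSeq k d θ j x) :=
  ⟨l1 x, by rintro _ ⟨j, rfl⟩; exact normSeq_le_l1 hθ0 hθ1 j x⟩

theorem normSeq_le_tnorm (hθ0 : 0 ≤ θ) (hθ1 : θ ≤ 1) (j : ℕ) (x : Vec k →₀ ℝ) :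
    normSeq k d θ j x ≤ tnorm k d θ x :=
  le_ciSup (normSeq_bddAbove hθ0 hθ1 x) j

theorem tnorm_le {c : ℝ} (hc : 0 ≤ c) (x : Vec k →₀ ℝ)
    (h : ∀ j, normSeq k d θ j x ≤ c) : tnorm k d θ x ≤ c :=
  Real.iSup_le h hc

theorem tnorm_nonneg (hθ0 : 0 ≤ θ) (hθ1 : θ ≤ 1) (x : Vec k →₀ ℝ) : 0 ≤ tnorm k d θ x :=
  le_trans (normSeq_nonneg 0 x) (normSeq_le_tnorm hθ0 hθ1 0 x)

theorem normSeq_add_le (hθ0 : 0 ≤ θ) (hθ1 : θ ≤ 1) (j : ℕ) (x y : Vec k →₀ ℝ) :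
    normSeq k d θ j (x + y) ≤ normSeq k d θ j x + normSeq k d θ j y := by
  induction j generalizing x y with
  | zero =>
    refine ciSup_le fun v => ?_
    calc |(x + y) v| = |x v + y v| := by rw [Finsupp.add_apply]
      _ ≤ |x v| + |y v| := abs_add_le _ _
      _ ≤ _ := add_le_add (le_ciSup (bdd0 x) v) (le_ciSup (bdd0 y) v)
  | succ j ih =>
    rw [normSeq_succ]
    refine max_le (le_trans (ih x y)
      (add_le_add (normSeq_le_succ j x) (normSeq_le_succ j y))) ?_
    refine Real.sSup_le ?_
      (add_nonneg (normSeq_nonneg _ _) (normSeq_nonneg _ _))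
    rintro r ⟨m, hm, E, hE, rfl⟩
    have h1 : ∀ i : Fin m, normSeq k d θ j (restrict (E i) (x + y)) ≤
        normSeq k d θ j (restrict (E i) x) + normSeq k d θ j (restrict (E i) y) := by
      intro i; rw [restrict_add]; exact ih _ _
    calc θ * ∑ i, normSeq k d θ j (restrict (E i) (x + y))
        ≤ θ * ∑ i, (normSeq k d θ j (restrict (E i) x) +
            normSeq k d θ j (restrict (E i) y)) :=
          mul_le_mul_of_nonneg_left (Finset.sum_le_sum fun i _ => h1 i) hθ0
      _ = θ * ∑ i, normSeq k d θ j (restrict (E i) x) +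
          θ * ∑ i, normSeq k d θ j (restrict (E i) y) := by
          rw [Finset.sum_add_distrib, mul_add]
      _ ≤ _ := add_le_add (member_le_normSeq_succ hθ0 hθ1 j x hm E hE)
          (member_le_normSeq_succ hθ0 hθ1 j y hm E hE)

theorem normSeq_smul_le (hθ0 : 0 ≤ θ) (hθ1 : θ ≤ 1) (j : ℕ) (c : ℝ) (x : Vec k →₀ ℝ) :
    normSeq k d θ j (c • x) ≤ |c| * normSeq k d θ j x := by
  induction j generalizing x with
  | zero =>
    refine ciSup_le fun v => ?_
    calc |(c • x) v| = |c| * |x v| := by rw [Finsupp.smul_apply, smul_eq_mul, abs_mul]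
      _ ≤ _ := mul_le_mul_of_nonneg_left (le_ciSup (bdd0 x) v) (abs_nonneg c)
  | succ j ih =>
    rw [normSeq_succ]
    refine max_le (le_trans (ih x) (mul_le_mul_of_nonneg_left
      (normSeq_le_succ j x) (abs_nonneg c))) ?_
    refine Real.sSup_le ?_ (mul_nonneg (abs_nonneg c) (normSeq_nonneg _ _))
    rintro r ⟨m, hm, E, hE, rfl⟩
    have h1 : ∀ i : Fin m, normSeq k d θ j (restrict (E i) (c • x)) ≤
        |c| * normSeq k d θ j (restrict (E i) x) := by
      intro i; rw [restrict_smul]; exact ih _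
    calc θ * ∑ i, normSeq k d θ j (restrict (E i) (c • x))
        ≤ θ * ∑ i, |c| * normSeq k d θ j (restrict (E i) x) :=
          mul_le_mul_of_nonneg_left (Finset.sum_le_sum fun i _ => h1 i) hθ0
      _ = |c| * (θ * ∑ i, normSeq k d θ j (restrict (E i) x)) := by
          rw [← Finset.mul_sum]; ring
      _ ≤ _ := mul_le_mul_of_nonneg_left
          (member_le_normSeq_succ hθ0 hθ1 j x hm E hE) (abs_nonneg c)

theorem normSeq_restrict_le (hθ0 : 0 ≤ θ) (hθ1 : θ ≤ 1) (j : ℕ) (F : Finset (Vec k))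
    (x : Vec k →₀ ℝ) : normSeq k d θ j (restrict F x) ≤ normSeq k d θ j x := by
  induction j generalizing x F with
  | zero =>
    refine ciSup_le fun v => ?_
    refine le_trans ?_ (le_ciSup (bdd0 x) v)
    rw [restrict_apply]
    by_cases h : v ∈ F <;> simp [h, abs_nonneg]
  | succ j ih =>
    rw [normSeq_succ]
    refine max_le (le_trans (ih F x) (normSeq_le_succ j x)) ?_
    refine Real.sSup_le ?_ (normSeq_nonneg _ _)
    rintro r ⟨m, hm, E, hE, rfl⟩
    have h1 : ∀ i : Fin m, normSeq k d θ j (restrict (E i) (restrict F x)) ≤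
        normSeq k d θ j (restrict (E i) x) := by
      intro i; rw [restrict_comm]; exact ih F _
    calc θ * ∑ i, normSeq k d θ j (restrict (E i) (restrict F x))
        ≤ θ * ∑ i, normSeq k d θ j (restrict (E i) x) :=
          mul_le_mul_of_nonneg_left (Finset.sum_le_sum fun i _ => h1 i) hθ0
      _ ≤ _ := member_le_normSeq_succ hθ0 hθ1 j x hm E hE

theorem tnorm_restrict_le (hθ0 : 0 ≤ θ) (hθ1 : θ ≤ 1) (F : Finset (Vec k))
    (x : Vec k →₀ ℝ) : tnorm k d θ (restrict F x) ≤ tnorm k d θ x :=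
  tnorm_le (tnorm_nonneg hθ0 hθ1 x) _ fun j =>
    le_trans (normSeq_restrict_le hθ0 hθ1 j F x) (normSeq_le_tnorm hθ0 hθ1 j x)

end NormSeqLemmas
section Group

variable {k d : ℕ} {θ : ℝ}

theorem group_le_normSeq_succ (hθ0 : 0 ≤ θ) (hθ1 : θ ≤ 1) (j : ℕ) (x : Vec k →₀ ℝ)
    {m : ℕ} (E : Fin m → Finset (Vec k)) (hE : Admissible k d E)
    (R : Finset (Fin m)) (hR : R.Nonempty) :
    θ * ∑ r ∈ R, normSeq k d θ j (restrict (E r) x) ≤ normSeq k d θ (j + 1) x := by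
  classical
  set e := R.orderIsoOfFin rfl with he
  have hadm : Admissible k d (fun t : Fin R.card => E (e t)) := by
    refine ⟨le_trans ?_ hE.1, fun t => hE.2.1 _, fun i j hij => hE.2.2 _ _ ?_⟩
    · calc R.card ≤ Finset.univ.card := Finset.card_le_univ R
        _ = m := Finset.card_fin m
    · exact_mod_cast e.strictMono hij
  have hm : 1 ≤ R.card := hR.card_pos
  have := member_le_normSeq_succ hθ0 hθ1 j x hm _ hadm
  refine le_trans (le_of_eq ?_) this
  congr 1
  rw [← Finset.sum_coe_sort R (fun r => normSeq k d θ j (restrict (E r) x))]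
  exact (Fintype.sum_equiv e.toEquiv _ _ (fun t => rfl)).symm

end Group
section SvalSec

open Classical in
noncomputable def mmw {n : ℕ} (A : Finset (Fin n)) (i : Fin n) : ℝ :=
  if (∀ i' ∈ A, i ≤ i') ∨ (∀ i' ∈ A, i' ≤ i) then 1 else 2

theorem mmw_one_le {n : ℕ} (A : Finset (Fin n)) (i : Fin n) : 1 ≤ mmw A i := by
  rw [mmw]; split <;> norm_num

theorem mmw_le_two {n : ℕ} (A : Finset (Fin n)) (i : Fin n) : mmw A i ≤ 2 := by
  rw [mmw]; split <;> norm_num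

theorem mmw_pos {n : ℕ} (A : Finset (Fin n)) (i : Fin n) : 0 < mmw A i :=
  lt_of_lt_of_le one_pos (mmw_one_le A i)

theorem mmw_mono {n : ℕ} {K A : Finset (Fin n)} (h : K ⊆ A) (i : Fin n) :
    mmw K i ≤ mmw A i := by
  rw [mmw, mmw]
  by_cases hA : (∀ i' ∈ A, i ≤ i') ∨ (∀ i' ∈ A, i' ≤ i)
  · rw [if_pos hA, if_pos (hA.imp (fun h' i' hi' => h' i' (h hi'))
      (fun h' i' hi' => h' i' (h hi')))]
  · rw [if_neg hA]
    split <;> norm_num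

theorem mmw_eq_one {n : ℕ} {A : Finset (Fin n)} {i : Fin n}
    (h : (∀ i' ∈ A, i ≤ i') ∨ (∀ i' ∈ A, i' ≤ i)) : mmw A i = 1 := by
  rw [mmw, if_pos h]

theorem mmw_eq_two {n : ℕ} {A : Finset (Fin n)} {i : Fin n}
    {i₁ i₂ : Fin n} (h₁ : i₁ ∈ A) (h₂ : i₂ ∈ A) (hl : i₁ < i) (hr : i < i₂) :
    mmw A i = 2 := by
  rw [mmw, if_neg]
  rintro (h | h)
  · exact absurd (h i₁ h₁) (not_le.2 hl)
  · exact absurd (h i₂ h₂) (not_le.2 hr)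

def SvalSet (θ q : ℝ) {n : ℕ} (A : Finset (Fin n)) (c : Fin n → ℝ) : Set ℝ :=
  { v | ∃ w : Fin n → ℝ, (∀ i, 0 ≤ w i ∧ w i ≤ 1) ∧ ((∑ i ∈ A, (θ * w i) ^ q) ≤ 1) ∧
      v = ∑ i ∈ A, mmw A i * |c i| * w i }

noncomputable def Sval (θ q : ℝ) {n : ℕ} (A : Finset (Fin n)) (c : Fin n → ℝ) : ℝ :=
  sSup (SvalSet θ q A c)

theorem zero_mem_SvalSet {θ q : ℝ} (hq : q ≠ 0) {n : ℕ} (A : Finset (Fin n))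
    (c : Fin n → ℝ) : (0 : ℝ) ∈ SvalSet θ q A c := by
  refine ⟨fun _ => 0, fun i => ⟨le_refl 0, zero_le_one⟩, ?_, ?_⟩
  · simp [Real.zero_rpow hq]
  · simp

theorem bddAbove_SvalSet (θ q : ℝ) {n : ℕ} (A : Finset (Fin n)) (c : Fin n → ℝ) :
    BddAbove (SvalSet θ q A c) := by
  refine ⟨∑ i ∈ A, 2 * |c i|, ?_⟩
  rintro v ⟨w, hw, _, rfl⟩
  refine Finset.sum_le_sum fun i _ => ?_
  calc mmw A i * |c i| * w i ≤ mmw A i * |c i| * 1 := by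
        refine mul_le_mul_of_nonneg_left (hw i).2 ?_
        exact mul_nonneg (mmw_pos A i).le (abs_nonneg _)
    _ = mmw A i * |c i| := mul_one _
    _ ≤ 2 * |c i| := mul_le_mul_of_nonneg_right (mmw_le_two A i) (abs_nonneg _)

theorem Sval_nonneg {θ q : ℝ} (hq : q ≠ 0) {n : ℕ} (A : Finset (Fin n))
    (c : Fin n → ℝ) : 0 ≤ Sval θ q A c :=
  le_csSup (bddAbove_SvalSet θ q A c) (zero_mem_SvalSet hq A c)

theorem le_Sval {θ q : ℝ} {n : ℕ} {A : Finset (Fin n)} {c : Fin n → ℝ} {v : ℝ}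
    (hv : v ∈ SvalSet θ q A c) : v ≤ Sval θ q A c :=
  le_csSup (bddAbove_SvalSet θ q A c) hv

theorem Sval_witness {θ q : ℝ} (hq : q ≠ 0) {n : ℕ} (A : Finset (Fin n))
    (c : Fin n → ℝ) {ε : ℝ} (hε : 0 < ε) :
    ∃ w : Fin n → ℝ, (∀ i, 0 ≤ w i ∧ w i ≤ 1) ∧ ((∑ i ∈ A, (θ * w i) ^ q) ≤ 1) ∧
      Sval θ q A c ≤ (∑ i ∈ A, mmw A i * |c i| * w i) + ε := by
  have hne : (SvalSet θ q A c).Nonempty := ⟨0, zero_mem_SvalSet hq A c⟩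
  have hlt : Sval θ q A c - ε < Sval θ q A c := by linarith
  obtain ⟨v, hv, hvlt⟩ := exists_lt_of_lt_csSup hne hlt
  obtain ⟨w, hw1, hw2, rfl⟩ := hv
  exact ⟨w, hw1, hw2, by linarith⟩

end SvalSec
section Exponents

theorem theta_pow_q {d : ℕ} {θ p q : ℝ} (hd : 2 ≤ d) (hθ0 : 0 < θ) (hp : 1 < p)
    (hq : q = p / (p - 1)) (hdp : (d : ℝ) * θ = (d : ℝ) ^ (1 / p)) :
    θ ^ q = ((d : ℝ))⁻¹ := by
  have hd0 : (0 : ℝ) < (d : ℝ) := by positivity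
  have hθeq : θ = (d : ℝ) ^ (1 / p - 1) := by
    rw [Real.rpow_sub hd0, Real.rpow_one, ← hdp]
    field_simp
  have hexp : (1 / p - 1) * q = -1 := by
    rw [hq]
    have hp0 : p ≠ 0 := by linarith
    have hp1 : p - 1 ≠ 0 := by intro h; apply hp.ne'; linarith
    field_simp
    ring
  rw [hθeq, ← Real.rpow_mul hd0.le, hexp, Real.rpow_neg_one]

theorem q_pos {p q : ℝ} (hp : 1 < p) (hq : q = p / (p - 1)) : 0 < q := by
  rw [hq]; exact div_pos (by linarith) (by linarith)

theorem d_pow_inv_q {d : ℕ} {θ p q : ℝ} (hd : 2 ≤ d) (hθ0 : 0 < θ) (hp : 1 < p)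
    (hq : q = p / (p - 1)) (hdp : (d : ℝ) * θ = (d : ℝ) ^ (1 / p)) :
    (d : ℝ) ^ (1 / q) = θ⁻¹ := by
  have hd0 : (0 : ℝ) < (d : ℝ) := by positivity
  have h1 : θ ^ q = ((d : ℝ))⁻¹ := theta_pow_q hd hθ0 hp hq hdp
  have hq0 : q ≠ 0 := (q_pos hp hq).ne'
  have h2 : (θ ^ q) ^ (1 / q) = θ := by
    rw [← Real.rpow_mul hθ0.le, mul_one_div, div_self hq0, Real.rpow_one]
  rw [h1, Real.inv_rpow hd0.le] at h2
  rw [← h2, inv_inv]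


end Exponents

section SvalFinal

theorem Sval_le_final {d : ℕ} {θ p q : ℝ} (hd : 2 ≤ d) (hθ0 : 0 < θ) (hp : 1 < p)
    (hq : q = p / (p - 1)) (hdp : (d : ℝ) * θ = (d : ℝ) ^ (1 / p))
    {n : ℕ} (A : Finset (Fin n)) (c : Fin n → ℝ) :
    Sval θ q A c ≤ (2 / θ) * (∑ i ∈ A, |c i| ^ p) ^ (1 / p) := by
  have hd0 : (0 : ℝ) < (d : ℝ) := by positivity
  have hq0 : 0 < q := q_pos hp hq
  have hpq : p.HolderConjugate q := by
    refine Real.holderConjugate_iff.2 ⟨hp, ?_⟩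
    rw [hq]
    have hp0 : p ≠ 0 := by linarith
    have hp1 : p - 1 ≠ 0 := by intro h; apply hp.ne'; linarith
    field_simp
    ring
  have hRHS : 0 ≤ (2 / θ) * (∑ i ∈ A, |c i| ^ p) ^ (1 / p) := by
    apply mul_nonneg (by positivity)
    apply Real.rpow_nonneg
    exact Finset.sum_nonneg fun i _ => Real.rpow_nonneg (abs_nonneg _) p
  refine Real.sSup_le ?_ hRHS
  rintro v ⟨w, hw, hK, rfl⟩
  have hθq : θ ^ q = ((d : ℝ))⁻¹ := theta_pow_q hd hθ0 hp hq hdp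
  -- step 1
  have h1 : ∑ i ∈ A, mmw A i * |c i| * w i ≤ 2 * ∑ i ∈ A, |c i| * w i := by
    rw [Finset.mul_sum]
    refine Finset.sum_le_sum fun i _ => ?_
    have : mmw A i * (|c i| * w i) ≤ 2 * (|c i| * w i) :=
      mul_le_mul_of_nonneg_right (mmw_le_two A i)
        (mul_nonneg (abs_nonneg _) (hw i).1)
    linarith [this]
  -- step 2 Hölder
  have h2 : ∑ i ∈ A, |c i| * w i ≤
      (∑ i ∈ A, |c i| ^ p) ^ (1 / p) * (∑ i ∈ A, w i ^ q) ^ (1 / q) := by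
    have h := Real.inner_le_Lp_mul_Lq A (fun i => |c i|) w hpq
    simp only [abs_abs] at h
    have hw' : ∀ i ∈ A, |w i| ^ q = w i ^ q := fun i _ => by
      rw [abs_of_nonneg (hw i).1]
    rw [Finset.sum_congr rfl hw'] at h
    exact h
  -- step 3 Kraft
  have h3 : (∑ i ∈ A, w i ^ q) ≤ (d : ℝ) := by
    have heq : ∀ i ∈ A, (θ * w i) ^ q = θ ^ q * w i ^ q := fun i _ =>
      Real.mul_rpow hθ0.le (hw i).1
    rw [Finset.sum_congr rfl heq, ← Finset.mul_sum, hθq] at hK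
    rw [inv_mul_le_iff₀ hd0] at hK
    simpa using hK

  have h4 : (∑ i ∈ A, w i ^ q) ^ (1 / q) ≤ θ⁻¹ := by
    rw [← d_pow_inv_q hd hθ0 hp hq hdp]
    exact Real.rpow_le_rpow (Finset.sum_nonneg fun i _ =>
      Real.rpow_nonneg (hw i).1 q) h3 (by positivity)
  calc ∑ i ∈ A, mmw A i * |c i| * w i ≤ 2 * ∑ i ∈ A, |c i| * w i := h1
    _ ≤ 2 * ((∑ i ∈ A, |c i| ^ p) ^ (1 / p) * (∑ i ∈ A, w i ^ q) ^ (1 / q)) := by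
        refine mul_le_mul_of_nonneg_left h2 (by norm_num)
    _ ≤ 2 * ((∑ i ∈ A, |c i| ^ p) ^ (1 / p) * θ⁻¹) := by
        refine mul_le_mul_of_nonneg_left ?_ (by norm_num)
        exact mul_le_mul_of_nonneg_left h4 (Real.rpow_nonneg
          (Finset.sum_nonneg fun i _ => Real.rpow_nonneg (abs_nonneg _) p) _)
    _ = (2 / θ) * (∑ i ∈ A, |c i| ^ p) ^ (1 / p) := by
        field_simp

end SvalFinal
section MoreHelpers

variable {k d : ℕ} {θ : ℝ}

theorem l1_zero : l1 (0 : Vec k →₀ ℝ) = 0 := by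
  rw [l1]
  simp

theorem normSeq_zero_vec (hθ0 : 0 ≤ θ) (hθ1 : θ ≤ 1) (j : ℕ) :
    normSeq k d θ j (0 : Vec k →₀ ℝ) = 0 :=
  le_antisymm (by simpa [l1_zero] using normSeq_le_l1 (k := k) (d := d) hθ0 hθ1 j 0)
    (normSeq_nonneg j 0)

theorem normSeq_sum_le (hθ0 : 0 ≤ θ) (hθ1 : θ ≤ 1) (j : ℕ) {ι : Type*}
    (s : Finset ι) (y : ι → (Vec k →₀ ℝ)) :
    normSeq k d θ j (∑ i ∈ s, y i) ≤ ∑ i ∈ s, normSeq k d θ j (y i) := by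
  classical
  induction s using Finset.induction_on with
  | empty => simp [normSeq_zero_vec hθ0 hθ1 j]
  | insert _ _ hx ih =>
    rename_i a t
    rw [Finset.sum_insert hx, Finset.sum_insert hx]
    exact le_trans (normSeq_add_le hθ0 hθ1 j _ _) (add_le_add_right ih _)

theorem restrict_sum {ι : Type*} (E : Finset (Vec k)) (s : Finset ι)
    (f : ι → (Vec k →₀ ℝ)) :
    restrict E (∑ i ∈ s, f i) = ∑ i ∈ s, restrict E (f i) := by
  classical
  induction s using Finset.induction_on with
  | empty =>
    ext v
    simp [restrict_apply]
  | insert _ _ hx ih =>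
    rename_i a t
    rw [Finset.sum_insert hx, Finset.sum_insert hx, restrict_add, ih]

theorem restrict_ne_zero_iff (E : Finset (Vec k)) (x : Vec k →₀ ℝ) :
    restrict E x ≠ 0 ↔ ∃ v, v ∈ E ∧ x v ≠ 0 := by
  rw [Ne, ← Finsupp.support_eq_empty.not]
  rw [← Ne, ← Finset.nonempty_iff_ne_empty]
  constructor
  · rintro ⟨v, hv⟩
    rw [Finsupp.mem_support_iff, restrict_apply] at hv
    by_cases h : v ∈ E
    · exact ⟨v, h, by simpa [h] using hv⟩
    · simp [h] at hv
  · rintro ⟨v, hvE, hv⟩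
    refine ⟨v, ?_⟩
    rw [Finsupp.mem_support_iff, restrict_apply, if_pos hvE]
    exact hv

end MoreHelpers
section Main

set_option maxHeartbeats 1600000 in
theorem main_estimate {k d : ℕ} {θ p q : ℝ} (hd : 2 ≤ d) (hθ0 : 0 < θ) (hθ1 : θ < 1)
    (hp : 1 < p) (hq : q = p / (p - 1)) (hdp : (d : ℝ) * θ = (d : ℝ) ^ (1 / p))
    (j : ℕ) :
    ∀ (n : ℕ) (u : Fin n → (Vec k →₀ ℝ)) (c : Fin n → ℝ) (A : Finset (Fin n)),
      (∀ i ∈ A, tnorm k d θ (u i) ≤ 1) →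
      (∀ i i' : Fin n, i ∈ A → i' ∈ A → i < i' →
        ∀ w ∈ (u i).support, ∀ w' ∈ (u i').support, prec w.1 w'.1) →
      normSeq k d θ j (∑ i ∈ A, c i • u i) ≤ Sval θ q A c := by
  have hq0 : 0 < q := q_pos hp hq
  have hθq : θ ^ q = ((d : ℝ))⁻¹ := theta_pow_q hd hθ0 hp hq hdp
  have hd0 : (0 : ℝ) < (d : ℝ) := by positivity
  have hdinv1 : ((d : ℝ))⁻¹ ≤ 1 := by
    rw [inv_le_one₀ hd0]
    exact_mod_cast le_trans one_le_two hd
  induction j with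
  | zero =>
    intro n u c A hu hbl
    refine ciSup_le fun v => ?_
    have happ : (∑ i ∈ A, c i • u i) v = ∑ i ∈ A, c i * u i v := by
      rw [Finset.sum_apply']
      exact Finset.sum_congr rfl fun i _ => by rw [Finsupp.smul_apply, smul_eq_mul]
    by_cases hex : ∃ i ∈ A, u i v ≠ 0
    · obtain ⟨i₀, hi₀A, hi₀⟩ := hex
      have hz : ∀ i ∈ A, i ≠ i₀ → c i * u i v = 0 := by
        intro i hiA hne
        have : u i v = 0 := by
          by_contra hvi
          rcases lt_or_gt_of_ne hne with h | h
          · exact prec_irrefl v.1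
              (hbl i i₀ hiA hi₀A h v (Finsupp.mem_support_iff.2 hvi) v
                (Finsupp.mem_support_iff.2 hi₀))
          · exact prec_irrefl v.1
              (hbl i₀ i hi₀A hiA h v (Finsupp.mem_support_iff.2 hi₀) v
                (Finsupp.mem_support_iff.2 hvi))
        rw [this, mul_zero]
      have hsum : (∑ i ∈ A, c i • u i) v = c i₀ * u i₀ v := by
        rw [happ]
        exact Finset.sum_eq_single_of_mem i₀ hi₀A hz
      have habs : |(∑ i ∈ A, c i • u i) v| ≤ |c i₀| := by
        rw [hsum, abs_mul]
        have h1 : |u i₀ v| ≤ 1 := by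
          refine le_trans (le_ciSup (bdd0 (u i₀)) v) ?_
          exact le_trans (normSeq_le_tnorm hθ0.le hθ1.le 0 (u i₀)) (hu i₀ hi₀A)
        calc |c i₀| * |u i₀ v| ≤ |c i₀| * 1 :=
              mul_le_mul_of_nonneg_left h1 (abs_nonneg _)
          _ = |c i₀| := mul_one _
      classical
      have hvmem : (mmw A i₀ * |c i₀|) ∈ SvalSet θ q A c := by
        refine ⟨fun i => if i = i₀ then 1 else 0, ?_, ?_, ?_⟩
        · intro i; by_cases h : i = i₀ <;> simp [h]
        · have : ∀ i ∈ A, (θ * if i = i₀ then (1:ℝ) else 0) ^ q =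
              if i = i₀ then θ ^ q else 0 := by
            intro i _
            by_cases h : i = i₀ <;> simp [h, Real.zero_rpow hq0.ne']
          rw [Finset.sum_congr rfl this, Finset.sum_ite_eq' A i₀ (fun _ => θ ^ q),
            if_pos hi₀A, hθq]
          exact hdinv1
        · rw [eq_comm]
          rw [Finset.sum_eq_single_of_mem i₀ hi₀A (fun i _ hne => by simp [hne])]
          simp
      refine le_trans habs (le_trans ?_ (le_Sval hvmem))
      exact le_mul_of_one_le_left (abs_nonneg _) (mmw_one_le A i₀)
    · push_neg at hex
      have : (∑ i ∈ A, c i • u i) v = 0 := by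
        rw [happ]
        exact Finset.sum_eq_zero fun i hi => by rw [hex i hi, mul_zero]
      rw [this, abs_zero]
      exact Sval_nonneg hq0.ne' A c
  | succ j ih =>
    intro n u c A hu hbl
    rw [normSeq_succ]
    refine max_le (ih n u c A hu hbl) (Real.sSup_le ?_ (Sval_nonneg hq0.ne' A c))
    rintro x ⟨m, hm, E, hE, rfl⟩
    classical
    set z := ∑ i ∈ A, c i • u i with hz
    set I : Fin m → Finset (Fin n) :=
      fun r => A.filter (fun i => restrict (E r) (u i) ≠ 0) with hI
    set Rr : Fin n → Finset (Fin m) :=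
      fun i => Finset.univ.filter (fun r => i ∈ I r) with hRr
    -- staircase
    have hST : ∀ {r s : Fin m} {i i' : Fin n}, r < s → i ∈ I r → i' ∈ I s → i ≤ i' := by
      intro r s i i' hrs hiIr hi'Is
      by_contra hlt
      push_neg at hlt
      rw [hI, Finset.mem_filter] at hiIr hi'Is
      obtain ⟨v, hvE, hv⟩ := (restrict_ne_zero_iff _ _).1 hiIr.2
      obtain ⟨v', hv'E, hv'⟩ := (restrict_ne_zero_iff _ _).1 hi'Is.2
      exact prec_asymm (hE.2.2 r s hrs v hvE v' hv'E)
        (hbl i' i hi'Is.1 hiIr.1 hlt v' (Finsupp.mem_support_iff.2 hv')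
          v (Finsupp.mem_support_iff.2 hv))
    have hIR : ∀ (r : Fin m) (i : Fin n), i ∈ I r ↔ r ∈ Rr i := by
      intro r i
      rw [hRr]
      simp
    set Gset : Finset (Fin n) :=
      A.filter (fun i => 2 ≤ (Rr i).card ∧ ∃ r ∈ Rr i, I r = {i}) with hGset
    set K : Fin m → Finset (Fin n) :=
      fun r => (I r).filter (fun i => i ∉ Gset) with hK
    have hKI : ∀ r, K r ⊆ I r := fun r => Finset.filter_subset _ _
    have hIA : ∀ r, I r ⊆ A := fun r => Finset.filter_subset _ _
    have hKA : ∀ r, K r ⊆ A := fun r => le_trans (hKI r) (hIA r)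
    have hGsub : Gset ⊆ A := Finset.filter_subset _ _
    set CALLED : Finset (Fin m) := Finset.univ.filter (fun r => (K r).Nonempty)
      with hCALLED
    -- counting freed slots
    have hcount : CALLED.card + Gset.card ≤ m := by
      have hφex : ∀ i : Fin n, i ∈ Gset → ∃ r : Fin m, I r = {i} := by
        intro i hi
        rw [hGset, Finset.mem_filter] at hi
        obtain ⟨r, _, hr⟩ := hi.2.2
        exact ⟨r, hr⟩
      have hm0 : 0 < m := hm
      set φ : Fin n → Fin m := fun i =>
        if h : i ∈ Gset then (hφex i h).choose else ⟨0, hm0⟩ with hφ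
      have hφspec : ∀ i ∈ Gset, I (φ i) = {i} := by
        intro i h
        rw [hφ]
        simp only [dif_pos h]
        exact (hφex i h).choose_spec
      have hG_le : Gset.card ≤ (Finset.univ.filter (fun r => ¬(K r).Nonempty)).card := by
        refine Finset.card_le_card_of_injOn φ ?_ ?_
        · intro i hi
          rw [Finset.mem_coe, Finset.mem_filter]
          refine ⟨Finset.mem_univ _, ?_⟩
          rw [Finset.not_nonempty_iff_eq_empty, hK]
          simp only
          rw [hφspec i hi]
          rw [Finset.filter_singleton, if_neg (by simp [Finset.mem_coe.1 hi])]
        · intro i hi i' hi' heq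
          have h1 := hφspec i (Finset.mem_coe.1 hi)
          have h2 := hφspec i' (Finset.mem_coe.1 hi')
          rw [heq, h2] at h1
          exact (Finset.singleton_injective h1).symm
      have hsplit := Finset.card_filter_add_card_filter_not
        (s := (Finset.univ : Finset (Fin m))) (p := fun r => (K r).Nonempty)
      rw [Finset.card_univ, Fintype.card_fin] at hsplit
      rw [← hCALLED] at hsplit
      omega
    -- multi-index extremality
    have hmulti_ext : ∀ i, 2 ≤ (Rr i).card → ∀ r ∈ Rr i,
        (∀ i' ∈ I r, i ≤ i') ∨ (∀ i' ∈ I r, i' ≤ i) := by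
      intro i hcard r hr
      obtain ⟨s, hs, hsne⟩ := Finset.exists_mem_ne
        (s := Rr i) (by omega) r
      have hiIs : i ∈ I s := (hIR s i).2 hs
      rcases lt_or_gt_of_ne hsne with h | h
      · exact Or.inl fun i' hi' => hST h hiIs hi'
      · exact Or.inr fun i' hi' => hST h hi' hiIs
    -- composed indices have exactly two pieces
    have hcomp2 : ∀ i ∈ A, i ∉ Gset → 2 ≤ (Rr i).card →
        ∃ r₀ s₀ : Fin m, r₀ < s₀ ∧ Rr i = {r₀, s₀} := by
      intro i hiA hiG hcard
      have hne : (Rr i).Nonempty := Finset.card_pos.1 (by omega)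
      have hlt : (Rr i).min' hne < (Rr i).max' hne :=
        Finset.min'_lt_max'_of_card _ (by omega)
      refine ⟨(Rr i).min' hne, (Rr i).max' hne, hlt, ?_⟩
      apply Finset.Subset.antisymm
      · intro t ht
        by_contra htno
        rw [Finset.mem_insert, Finset.mem_singleton] at htno
        push_neg at htno
        have h1 : (Rr i).min' hne < t :=
          lt_of_le_of_ne (Finset.min'_le _ _ ht) (Ne.symm htno.1)
        have h2 : t < (Rr i).max' hne :=
          lt_of_le_of_ne (Finset.le_max' _ _ ht) htno.2
        have hIt : I t = {i} := by
          refine Finset.eq_singleton_iff_unique_mem.2 ⟨(hIR t i).2 ht, fun i' hi' => ?_⟩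
          have hup : i' ≤ i := hST h2 hi' ((hIR _ i).2 ((Rr i).max'_mem hne))
          have hdn : i ≤ i' := hST h1 ((hIR _ i).2 ((Rr i).min'_mem hne)) hi'
          exact le_antisymm hup hdn
        exact hiG (by rw [hGset, Finset.mem_filter]; exact ⟨hiA, hcard, t, ht, hIt⟩)
      · intro t ht
        rw [Finset.mem_insert, Finset.mem_singleton] at ht
        rcases ht with rfl | rfl
        · exact (Rr i).min'_mem hne
        · exact (Rr i).max'_mem hne
    -- epsilon setup and witnesses
    refine le_of_forall_pos_le_add fun ε hε => ?_
    set ε' := ε / (d + 1) with hε'def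
    have hε'0 : 0 < ε' := by positivity
    have hwit : ∀ r : Fin m, ∃ w : Fin n → ℝ, (∀ i, 0 ≤ w i ∧ w i ≤ 1) ∧
        ((∑ i ∈ K r, (θ * w i) ^ q) ≤ 1) ∧
        Sval θ q (K r) c ≤ (∑ i ∈ K r, mmw (K r) i * |c i| * w i) + ε' :=
      fun r => Sval_witness hq0.ne' (K r) c hε'0
    choose W hW0 hWK hWS using hwit
    set What : Fin n → ℝ := fun i =>
      if i ∈ Gset then (mmw A i)⁻¹
      else if h : (Rr i).Nonempty then θ * (Rr i).sup' h (fun r => W r i) else 0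
      with hWhatdef
    have hWhat01 : ∀ i, 0 ≤ What i ∧ What i ≤ 1 := by
      intro i
      rw [hWhatdef]
      simp only
      by_cases hig : i ∈ Gset
      · rw [if_pos hig]
        refine ⟨inv_nonneg.2 (mmw_pos A i).le, ?_⟩
        rw [inv_le_one₀ (mmw_pos A i)]
        exact mmw_one_le A i
      · rw [if_neg hig]
        by_cases hne : (Rr i).Nonempty
        · rw [dif_pos hne]
          obtain ⟨r1, hr1⟩ := hne
          have hsupnn : 0 ≤ (Rr i).sup' ⟨r1, hr1⟩ (fun r => W r i) :=
            le_trans (hW0 r1 i).1 (Finset.le_sup' (f := fun r => W r i) hr1)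
          constructor
          · exact mul_nonneg hθ0.le hsupnn
          · calc θ * (Rr i).sup' ⟨r1, hr1⟩ (fun r => W r i) ≤ 1 * 1 :=
                mul_le_mul hθ1.le
                  (Finset.sup'_le _ _ fun r _ => (hW0 r i).2) hsupnn zero_le_one
              _ = 1 := mul_one 1
        · rw [dif_neg hne]
          exact ⟨le_refl 0, zero_le_one⟩
    -- Kraft feasibility of What
    have hKraftG : ∀ i ∈ Gset, (θ * What i) ^ q ≤ ((d : ℝ))⁻¹ := by
      intro i hig
      rw [hWhatdef]
      simp only
      rw [if_pos hig]
      calc (θ * (mmw A i)⁻¹) ^ q ≤ (θ * 1) ^ q := by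
            refine Real.rpow_le_rpow
              (mul_nonneg hθ0.le (inv_nonneg.2 (mmw_pos A i).le)) ?_ hq0.le
            refine mul_le_mul_of_nonneg_left ?_ hθ0.le
            rw [inv_le_one₀ (mmw_pos A i)]
            exact mmw_one_le A i
        _ = θ ^ q := by rw [mul_one]
        _ = _ := hθq
    have hKraftNG : ∀ i ∈ A, i ∉ Gset → (θ * What i) ^ q ≤
        ((d : ℝ))⁻¹ * ∑ r ∈ Rr i, (θ * W r i) ^ q := by
      intro i hiA hig
      have hrhs0 : 0 ≤ ∑ r ∈ Rr i, (θ * W r i) ^ q :=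
        Finset.sum_nonneg fun r _ =>
          Real.rpow_nonneg (mul_nonneg hθ0.le (hW0 r i).1) q
      rw [hWhatdef]
      simp only
      rw [if_neg hig]
      by_cases hne : (Rr i).Nonempty
      · rw [dif_pos hne]
        obtain ⟨r₁, hr₁, hsup⟩ := Finset.exists_mem_eq_sup' hne (fun r => W r i)
        calc (θ * (θ * (Rr i).sup' hne fun r => W r i)) ^ q
            = θ ^ q * (θ * W r₁ i) ^ q := by
              rw [hsup, Real.mul_rpow hθ0.le (mul_nonneg hθ0.le (hW0 r₁ i).1)]
          _ ≤ θ ^ q * ∑ r ∈ Rr i, (θ * W r i) ^ q := by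
              refine mul_le_mul_of_nonneg_left ?_ (Real.rpow_nonneg hθ0.le q)
              exact Finset.single_le_sum (f := fun r => (θ * W r i) ^ q)
                (fun r _ => Real.rpow_nonneg (mul_nonneg hθ0.le (hW0 r i).1) q) hr₁
          _ = ((d : ℝ))⁻¹ * ∑ r ∈ Rr i, (θ * W r i) ^ q := by rw [hθq]
      · rw [dif_neg hne, mul_zero, Real.zero_rpow hq0.ne']
        exact mul_nonneg (inv_nonneg.2 hd0.le) hrhs0
    have hfG : A.filter (fun i => i ∈ Gset) = Gset := by
      ext i
      rw [Finset.mem_filter]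
      exact ⟨fun h => h.2, fun h => ⟨hGsub h, h⟩⟩
    have hKraft : (∑ i ∈ A, (θ * What i) ^ q) ≤ 1 := by
      have hsplitA := Finset.sum_filter_add_sum_filter_not A (fun i => i ∈ Gset)
        (fun i => (θ * What i) ^ q)
      have hswapK : ∑ i ∈ A.filter (fun i => i ∉ Gset), ∑ r ∈ Rr i, (θ * W r i) ^ q
          = ∑ r : Fin m, ∑ i ∈ K r, (θ * W r i) ^ q := by
        refine (Finset.sum_comm' ?_).symm
        intro r i
        constructor
        · rintro ⟨_, hiK⟩
          rw [hK, Finset.mem_filter] at hiK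
          refine ⟨(hIR r i).1 hiK.1, Finset.mem_filter.2 ⟨hIA r hiK.1, hiK.2⟩⟩
        · rintro ⟨hrR, hif⟩
          rw [Finset.mem_filter] at hif
          refine ⟨Finset.mem_univ r, ?_⟩
          rw [hK, Finset.mem_filter]
          exact ⟨(hIR r i).2 hrR, hif.2⟩
      have hCsum : ∑ r : Fin m, ∑ i ∈ K r, (θ * W r i) ^ q ≤ (CALLED.card : ℝ) := by
        have h1 : ∀ r : Fin m, ∑ i ∈ K r, (θ * W r i) ^ q ≤
            if (K r).Nonempty then (1 : ℝ) else 0 := by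
          intro r
          by_cases hKr : (K r).Nonempty
          · rw [if_pos hKr]; exact hWK r
          · rw [if_neg hKr, Finset.not_nonempty_iff_eq_empty.1 hKr, Finset.sum_empty]
        refine le_trans (Finset.sum_le_sum fun r _ => h1 r) ?_
        rw [Finset.sum_boole]
      have hGpart : ∑ i ∈ Gset, (θ * What i) ^ q ≤ (Gset.card : ℝ) * ((d : ℝ))⁻¹ := by
        refine le_trans (Finset.sum_le_sum fun i hi => hKraftG i hi) ?_
        rw [Finset.sum_const, nsmul_eq_mul]
      have hNGpart : ∑ i ∈ A.filter (fun i => i ∉ Gset), (θ * What i) ^ q ≤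
          ((d : ℝ))⁻¹ * (CALLED.card : ℝ) := by
        have hstep : ∑ i ∈ A.filter (fun i => i ∉ Gset), (θ * What i) ^ q ≤
            ∑ i ∈ A.filter (fun i => i ∉ Gset),
              ((d : ℝ))⁻¹ * ∑ r ∈ Rr i, (θ * W r i) ^ q := by
          refine Finset.sum_le_sum fun i hi => ?_
          rw [Finset.mem_filter] at hi
          exact hKraftNG i hi.1 hi.2
        refine le_trans hstep ?_
        rw [← Finset.mul_sum]
        refine mul_le_mul_of_nonneg_left ?_ (inv_nonneg.2 hd0.le)
        rw [hswapK]
        exact hCsum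
      calc ∑ i ∈ A, (θ * What i) ^ q
          = ∑ i ∈ Gset, (θ * What i) ^ q +
            ∑ i ∈ A.filter (fun i => i ∉ Gset), (θ * What i) ^ q := by
            rw [← hsplitA, hfG]
        _ ≤ (Gset.card : ℝ) * ((d : ℝ))⁻¹ + ((d : ℝ))⁻¹ * (CALLED.card : ℝ) :=
            add_le_add hGpart hNGpart
        _ = ((Gset.card : ℝ) + (CALLED.card : ℝ)) * ((d : ℝ))⁻¹ := by ring
        _ ≤ (d : ℝ) * ((d : ℝ))⁻¹ := by
            refine mul_le_mul_of_nonneg_right ?_ (inv_nonneg.2 hd0.le)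
            have : ((CALLED.card + Gset.card : ℕ) : ℝ) ≤ (m : ℝ) := by
              exact_mod_cast hcount
            push_cast at this
            have hmd : (m : ℝ) ≤ (d : ℝ) := by exact_mod_cast hE.1
            linarith
        _ = 1 := mul_inv_cancel₀ hd0.ne'
    -- triangle split of each restricted piece
    have hsplitr : ∀ r : Fin m, normSeq k d θ j (restrict (E r) z) ≤
        normSeq k d θ j (∑ i ∈ K r, c i • restrict (E r) (u i)) +
        ∑ i ∈ (I r).filter (fun i => i ∈ Gset),
          |c i| * normSeq k d θ j (restrict (E r) (u i)) := by
      intro r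
      have hzr : restrict (E r) z = ∑ i ∈ I r, c i • restrict (E r) (u i) := by
        rw [hz, restrict_sum]
        rw [Finset.sum_congr rfl (fun i _ => restrict_smul (E r) (c i) (u i))]
        refine (Finset.sum_subset (hIA r) ?_).symm
        intro i hiA hiI
        have h0 : restrict (E r) (u i) = 0 := by
          by_contra hne
          exact hiI (by rw [hI]; exact Finset.mem_filter.2 ⟨hiA, hne⟩)
        rw [h0, smul_zero]
      rw [hzr]
      have hpart : ∑ i ∈ I r, c i • restrict (E r) (u i) =
          (∑ i ∈ (I r).filter (fun i => i ∈ Gset), c i • restrict (E r) (u i)) +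
          (∑ i ∈ K r, c i • restrict (E r) (u i)) := by
        rw [hK]
        exact (Finset.sum_filter_add_sum_filter_not (I r) (fun i => i ∈ Gset) _).symm
      rw [hpart]
      refine le_trans (normSeq_add_le hθ0.le hθ1.le j _ _) ?_
      rw [add_comm]
      refine add_le_add_right ?_ _
      refine le_trans (normSeq_sum_le hθ0.le hθ1.le j _ _)
        (Finset.sum_le_sum fun i _ => ?_)
      exact normSeq_smul_le hθ0.le hθ1.le j (c i) _
    -- induction hypothesis on the called pieces
    have hsub : ∀ r : Fin m, normSeq k d θ j (∑ i ∈ K r, c i • restrict (E r) (u i)) ≤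
        (∑ i ∈ K r, mmw (K r) i * |c i| * W r i) + ε' := by
      intro r
      refine le_trans (ih n (fun i => restrict (E r) (u i)) c (K r) ?_ ?_) (hWS r)
      · intro i hi
        exact le_trans (tnorm_restrict_le hθ0.le hθ1.le _ _) (hu i (hKA r hi))
      · intro i i' hi hi' hlt w hw w' hw'
        exact hbl i i' (hKA r hi) (hKA r hi') hlt w (restrict_support_subset _ _ hw)
          w' (restrict_support_subset _ _ hw')
    -- grouped contribution
    have hgrp : θ * ∑ r : Fin m, ∑ i ∈ (I r).filter (fun i => i ∈ Gset),
        |c i| * normSeq k d θ j (restrict (E r) (u i)) ≤ ∑ i ∈ Gset, |c i| := by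
      have hswap : ∑ r : Fin m, ∑ i ∈ (I r).filter (fun i => i ∈ Gset),
          |c i| * normSeq k d θ j (restrict (E r) (u i)) =
          ∑ i ∈ Gset, ∑ r ∈ Rr i, |c i| * normSeq k d θ j (restrict (E r) (u i)) := by
        refine Finset.sum_comm' ?_
        intro r i
        constructor
        · rintro ⟨_, hif⟩
          rw [Finset.mem_filter] at hif
          exact ⟨(hIR r i).1 hif.1, hif.2⟩
        · rintro ⟨hrR, hig⟩
          exact ⟨Finset.mem_univ r, Finset.mem_filter.2 ⟨(hIR r i).2 hrR, hig⟩⟩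
      rw [hswap, Finset.mul_sum]
      refine Finset.sum_le_sum fun i hig => ?_
      have hfact : θ * ∑ r ∈ Rr i, |c i| * normSeq k d θ j (restrict (E r) (u i)) =
          |c i| * (θ * ∑ r ∈ Rr i, normSeq k d θ j (restrict (E r) (u i))) := by
        rw [Finset.mul_sum, Finset.mul_sum, Finset.mul_sum]
        exact Finset.sum_congr rfl fun r _ => by ring
      rw [hfact]
      have hcard2 : 2 ≤ (Rr i).card := by
        rw [hGset, Finset.mem_filter] at hig
        exact hig.2.1
      have hne : (Rr i).Nonempty := Finset.card_pos.1 (by omega)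
      have hgle : θ * ∑ r ∈ Rr i, normSeq k d θ j (restrict (E r) (u i)) ≤ 1 := by
        refine le_trans (group_le_normSeq_succ hθ0.le hθ1.le j (u i) E hE (Rr i) hne) ?_
        exact le_trans (normSeq_le_tnorm hθ0.le hθ1.le _ _) (hu i (hGsub hig))
      calc |c i| * (θ * ∑ r ∈ Rr i, normSeq k d θ j (restrict (E r) (u i)))
          ≤ |c i| * 1 := mul_le_mul_of_nonneg_left hgle (abs_nonneg _)
        _ = |c i| := mul_one _
    -- per-index value bound for non-grouped indices
    have hvali : ∀ i ∈ A, i ∉ Gset →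
        θ * ∑ r ∈ Rr i, mmw (K r) i * |c i| * W r i ≤ mmw A i * |c i| * What i := by
      intro i hiA hig
      have hWna : What i =
          if h : (Rr i).Nonempty then θ * (Rr i).sup' h (fun r => W r i) else 0 := by
        rw [hWhatdef]
        simp only
        rw [if_neg hig]
      by_cases hne : (Rr i).Nonempty
      · by_cases hc2 : 2 ≤ (Rr i).card
        · obtain ⟨r₀, s₀, hlt, hReq⟩ := hcomp2 i hiA hig hc2
          have hr₀ : r₀ ∈ Rr i := by rw [hReq]; simp
          have hs₀ : s₀ ∈ Rr i := by rw [hReq]; simp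
          have hmm1 : ∀ r ∈ Rr i, mmw (K r) i = 1 := by
            intro r hr
            rcases hmulti_ext i hc2 r hr with h | h
            · exact mmw_eq_one (Or.inl fun i' hi' => h i' (hKI r hi'))
            · exact mmw_eq_one (Or.inr fun i' hi' => h i' (hKI r hi'))
          have hmmA : mmw A i = 2 := by
            have hnoalone : ∀ r ∈ Rr i, I r ≠ {i} := by
              intro r hr hcon
              have hmem : i ∈ Gset := by
                rw [hGset, Finset.mem_filter]
                exact ⟨hiA, hc2, r, hr, hcon⟩
              exact hig hmem
            have hiIr₀ : i ∈ I r₀ := (hIR r₀ i).2 hr₀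
            have hiIs₀ : i ∈ I s₀ := (hIR s₀ i).2 hs₀
            have hex₁ : ∃ i' ∈ I r₀, i' ≠ i := by
              by_contra hcon
              push_neg at hcon
              exact hnoalone r₀ hr₀
                (Finset.eq_singleton_iff_unique_mem.2 ⟨hiIr₀, hcon⟩)
            have hex₂ : ∃ i' ∈ I s₀, i' ≠ i := by
              by_contra hcon
              push_neg at hcon
              exact hnoalone s₀ hs₀
                (Finset.eq_singleton_iff_unique_mem.2 ⟨hiIs₀, hcon⟩)
            obtain ⟨i₁, hi₁, hi₁ne⟩ := hex₁
            obtain ⟨i₂, hi₂, hi₂ne⟩ := hex₂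
            have h₁ : i₁ < i := lt_of_le_of_ne (hST hlt hi₁ hiIs₀) hi₁ne
            have h₂ : i < i₂ := lt_of_le_of_ne (hST hlt hiIr₀ hi₂) (Ne.symm hi₂ne)
            exact mmw_eq_two (hIA r₀ hi₁) (hIA s₀ hi₂) h₁ h₂
          have hsum : ∑ r ∈ Rr i, mmw (K r) i * |c i| * W r i =
              |c i| * W r₀ i + |c i| * W s₀ i := by
            rw [hReq, Finset.sum_pair hlt.ne]
            rw [hmm1 r₀ hr₀, hmm1 s₀ hs₀]
            ring
          have hsup₀ : W r₀ i ≤ (Rr i).sup' hne (fun r => W r i) :=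
            Finset.le_sup' (f := fun r => W r i) hr₀
          have hsup₁ : W s₀ i ≤ (Rr i).sup' hne (fun r => W r i) :=
            Finset.le_sup' (f := fun r => W r i) hs₀
          rw [hsum, hWna, dif_pos hne, hmmA]
          have habs : 0 ≤ |c i| := abs_nonneg _
          nlinarith [hθ0.le, mul_le_mul_of_nonneg_left hsup₀ habs,
            mul_le_mul_of_nonneg_left hsup₁ habs]
        · have hc1 : (Rr i).card = 1 := by
            have := Finset.card_pos.2 hne
            omega
          obtain ⟨r₁, hr₁eq⟩ := Finset.card_eq_one.1 hc1
          have hr₁ : r₁ ∈ Rr i := by rw [hr₁eq]; simp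
          rw [hWna, dif_pos hne]
          have hsupeq : (Rr i).sup' hne (fun r => W r i) = W r₁ i := by
            refine le_antisymm (Finset.sup'_le _ _ fun r hr => ?_)
              (Finset.le_sup' (f := fun r => W r i) hr₁)
            have hreq : r = r₁ := by
              rw [hr₁eq] at hr
              simpa using hr
            rw [hreq]
          rw [hsupeq, hr₁eq, Finset.sum_singleton]
          have hmmle : mmw (K r₁) i ≤ mmw A i := mmw_mono (hKA r₁) i
          have h0 : 0 ≤ |c i| * W r₁ i := mul_nonneg (abs_nonneg _) (hW0 r₁ i).1
          calc θ * (mmw (K r₁) i * |c i| * W r₁ i)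
              = θ * (mmw (K r₁) i * (|c i| * W r₁ i)) := by ring
            _ ≤ θ * (mmw A i * (|c i| * W r₁ i)) :=
                mul_le_mul_of_nonneg_left
                  (mul_le_mul_of_nonneg_right hmmle h0) hθ0.le
            _ = mmw A i * |c i| * (θ * W r₁ i) := by ring
      · rw [Finset.not_nonempty_iff_eq_empty.1 hne, Finset.sum_empty, mul_zero]
        rw [hWna, dif_neg hne, mul_zero]
    -- swap for the value sum
    have hswap2 : ∑ r : Fin m, ∑ i ∈ K r, mmw (K r) i * |c i| * W r i =
        ∑ i ∈ A.filter (fun i => i ∉ Gset), ∑ r ∈ Rr i,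
          mmw (K r) i * |c i| * W r i := by
      refine Finset.sum_comm' ?_
      intro r i
      constructor
      · rintro ⟨_, hiK⟩
        rw [hK, Finset.mem_filter] at hiK
        exact ⟨(hIR r i).1 hiK.1, Finset.mem_filter.2 ⟨hIA r hiK.1, hiK.2⟩⟩
      · rintro ⟨hrR, hif⟩
        rw [Finset.mem_filter] at hif
        refine ⟨Finset.mem_univ r, ?_⟩
        rw [hK, Finset.mem_filter]
        exact ⟨(hIR r i).2 hrR, hif.2⟩
    -- total value bound
    have hval : θ * (∑ r : Fin m, ∑ i ∈ K r, mmw (K r) i * |c i| * W r i) +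
        ∑ i ∈ Gset, |c i| ≤ ∑ i ∈ A, mmw A i * |c i| * What i := by
      have h1 : θ * (∑ r : Fin m, ∑ i ∈ K r, mmw (K r) i * |c i| * W r i) ≤
          ∑ i ∈ A.filter (fun i => i ∉ Gset), mmw A i * |c i| * What i := by
        rw [hswap2, Finset.mul_sum]
        refine Finset.sum_le_sum fun i hi => ?_
        rw [Finset.mem_filter] at hi
        exact hvali i hi.1 hi.2
      have h2 : ∑ i ∈ Gset, |c i| =
          ∑ i ∈ A.filter (fun i => i ∈ Gset), mmw A i * |c i| * What i := by
        rw [hfG]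
        refine Finset.sum_congr rfl fun i hig => ?_
        have : What i = (mmw A i)⁻¹ := by
          rw [hWhatdef]
          simp only
          rw [if_pos hig]
        rw [this, mul_right_comm, mul_inv_cancel₀ (mmw_pos A i).ne', one_mul]
      have h3 := Finset.sum_filter_add_sum_filter_not A (fun i => i ∈ Gset)
        (fun i => mmw A i * |c i| * What i)
      calc θ * (∑ r : Fin m, ∑ i ∈ K r, mmw (K r) i * |c i| * W r i) +
            ∑ i ∈ Gset, |c i|
          ≤ ∑ i ∈ A.filter (fun i => i ∉ Gset), mmw A i * |c i| * What i +
            ∑ i ∈ A.filter (fun i => i ∈ Gset), mmw A i * |c i| * What i := by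
            rw [h2] at *
            exact add_le_add h1 (le_refl _)
        _ = ∑ i ∈ A, mmw A i * |c i| * What i := by rw [add_comm]; exact h3
    -- final assembly
    have hmemval : (∑ i ∈ A, mmw A i * |c i| * What i) ∈ SvalSet θ q A c :=
      ⟨What, hWhat01, hKraft, rfl⟩
    have hεbound : θ * ((m : ℝ) * ε') ≤ ε := by
      have hm_le : (m : ℝ) ≤ (d : ℝ) := by exact_mod_cast hE.1
      rw [hε'def]
      have hd1 : (0:ℝ) < (d : ℝ) + 1 := by positivity
      have h1 : θ * ((m : ℝ) * (ε / (d + 1))) ≤ 1 * ((d : ℝ) * (ε / (d + 1))) := by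
        refine mul_le_mul hθ1.le ?_ ?_ zero_le_one
        · exact mul_le_mul_of_nonneg_right hm_le (by positivity)
        · positivity
      refine le_trans h1 ?_
      rw [one_mul]
      rw [mul_div_assoc']
      rw [div_le_iff₀ hd1]
      nlinarith
    calc θ * ∑ r : Fin m, normSeq k d θ j (restrict (E r) z)
        ≤ θ * ∑ r : Fin m, (normSeq k d θ j (∑ i ∈ K r, c i • restrict (E r) (u i)) +
            ∑ i ∈ (I r).filter (fun i => i ∈ Gset),
              |c i| * normSeq k d θ j (restrict (E r) (u i))) :=
          mul_le_mul_of_nonneg_left (Finset.sum_le_sum fun r _ => hsplitr r) hθ0.le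
      _ = θ * ∑ r : Fin m, normSeq k d θ j (∑ i ∈ K r, c i • restrict (E r) (u i)) +
          θ * ∑ r : Fin m, ∑ i ∈ (I r).filter (fun i => i ∈ Gset),
            |c i| * normSeq k d θ j (restrict (E r) (u i)) := by
          rw [Finset.sum_add_distrib, mul_add]
      _ ≤ θ * ∑ r : Fin m, ((∑ i ∈ K r, mmw (K r) i * |c i| * W r i) + ε') +
          ∑ i ∈ Gset, |c i| := by
          refine add_le_add ?_ hgrp
          exact mul_le_mul_of_nonneg_left (Finset.sum_le_sum fun r _ => hsub r) hθ0.le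
      _ = (θ * (∑ r : Fin m, ∑ i ∈ K r, mmw (K r) i * |c i| * W r i) +
          ∑ i ∈ Gset, |c i|) + θ * ((m : ℝ) * ε') := by
          rw [Finset.sum_add_distrib, Finset.sum_const, Finset.card_univ,
            Fintype.card_fin, nsmul_eq_mul, mul_add]
          ring
      _ ≤ ∑ i ∈ A, mmw A i * |c i| * What i + ε := add_le_add hval hεbound
      _ ≤ Sval θ q A c + ε := add_le_add_left (le_Sval hmemval) ε

end Main


theorem upper_lp_estimate_aux (k d : ℕ) (hd : 2 ≤ d) (θ : ℝ) (hθ0 : 0 < θ) (hθ1 : θ < 1)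
    (p : ℝ) (hp : 1 < p)
    (hdp : (d : ℝ) * θ = (d : ℝ) ^ (1 / p))
    (N : ℕ) (x : Fin N → (Vec k →₀ ℝ))
    (hxnorm : ∀ j, tnorm k d θ (x j) = 1)
    (hblock : ∀ i j, i < j → ∀ w ∈ (x i).support, ∀ w' ∈ (x j).support, prec w.1 w'.1)
    (a : Fin N → ℝ) :
    tnorm k d θ (∑ j, a j • x j) ≤ (2 / θ) * (∑ j, |a j| ^ p) ^ (1 / p) := by
  have key : ∀ jj : ℕ, normSeq k d θ jj (∑ j, a j • x j) ≤
      Sval θ (p / (p - 1)) (Finset.univ : Finset (Fin N)) a := by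
    intro jj
    refine main_estimate hd hθ0 hθ1 hp rfl hdp jj N x a Finset.univ ?_ ?_
    · exact fun i _ => le_of_eq (hxnorm i)
    · exact fun i i' _ _ hlt => hblock i i' hlt
  have h1 : tnorm k d θ (∑ j, a j • x j) ≤ Sval θ (p / (p - 1)) Finset.univ a :=
    tnorm_le (Sval_nonneg (q_pos hp rfl).ne' _ _) _ key
  exact le_trans h1 (Sval_le_final hd hθ0 hp rfl hdp Finset.univ a)

/-- upper `ℓ_p`-estimate for any finite normalized block basis:
`‖∑ a_j x_j‖ ≤ (2/θ)(∑ |a_j|^p)^{1/p}`, where `dθ = d^{1/p}`. -/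
theorem upper_lp_estimate (k d : ℕ) (hd : 2 ≤ d) (θ : ℝ) (hθ0 : 0 < θ) (hθ1 : θ < 1)
    (hdθ : 1 < (d : ℝ) * θ) (p : ℝ) (hp : 1 < p)
    (hdp : (d : ℝ) * θ = (d : ℝ) ^ (1 / p))
    (N : ℕ) (x : Fin N → (Vec k →₀ ℝ))
    (hxnorm : ∀ j, tnorm k d θ (x j) = 1)
    (hblock : ∀ i j, i < j → ∀ w ∈ (x i).support, ∀ w' ∈ (x j).support, prec w.1 w'.1)
    (a : Fin N → ℝ) :
    tnorm k d θ (∑ j, a j • x j) ≤ (2 / θ) * (∑ j, |a j| ^ p) ^ (1 / p) :=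
  upper_lp_estimate_aux k d hd θ hθ0 hθ1 p hp hdp N x hxnorm hblock a
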